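/- (Guthrie–Nymann) The set T = { Σ_{i≥1} ( ε_{2i−1}·(3/4^i) + ε_{2i}·(2/4^i) ) : ε_n ∈ {0,1} for all n }, i.e. the achievement set of the sequence whose (2i−1)-st term is 3/4^i and whose (2i)-th term is 2/4^i, has nonempty interior but is not a finite union of closed intervals; hence T is a Cantorval. -/

import Mathlib

open Filter

/-- `A` is a finite union of closed bounded intervals. -/
def IsFiniteUnionOfClosedIntervals (A : Set ℝ) : Prop :=
  ∃ s : Finset (ℝ × ℝ), A = ⋃ p ∈ s, Set.Icc p.1 p.2

/-- A Cantorval: a nonempty compact perfect subset of `ℝ` with nonempty interior which is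
not a finite union of closed intervals. -/
def IsCantorval (A : Set ℝ) : Prop :=
  A.Nonempty ∧ IsCompact A ∧ Perfect A ∧ (interior A).Nonempty ∧
    ¬ IsFiniteUnionOfClosedIntervals A

/-- The Guthrie–Nymann set `T`: the achievement set of the sequence whose `(2i-1)`-st term is
`3/4^i` and whose `(2i)`-th term is `2/4^i`. -/
def guthrieNymannSet : Set ℝ :=
  {s : ℝ | ∃ ε : ℕ → ℝ, (∀ n, ε n = 0 ∨ ε n = 1) ∧
    s = ∑' i : ℕ, (ε (2 * i) * (3 / 4 ^ (i + 1)) + ε (2 * i + 1) * (2 / 4 ^ (i + 1)))}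

local notation "T" => guthrieNymannSet

/-- the `i`-th term of the series. -/
noncomputable def gnTerm (ε : ℕ → ℝ) (i : ℕ) : ℝ :=
  ε (2 * i) * (3 / 4 ^ (i + 1)) + ε (2 * i + 1) * (2 / 4 ^ (i + 1))

lemma mem_gn {s : ℝ} :
    s ∈ guthrieNymannSet ↔ ∃ ε : ℕ → ℝ, (∀ n, ε n = 0 ∨ ε n = 1) ∧
      s = ∑' i : ℕ, gnTerm ε i := Iff.rfl

lemma eps_nonneg {ε : ℕ → ℝ} (hε : ∀ n, ε n = 0 ∨ ε n = 1) (n : ℕ) : 0 ≤ ε n := by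
  rcases hε n with h | h <;> rw [h] <;> norm_num

lemma eps_le_one {ε : ℕ → ℝ} (hε : ∀ n, ε n = 0 ∨ ε n = 1) (n : ℕ) : ε n ≤ 1 := by
  rcases hε n with h | h <;> rw [h] <;> norm_num

lemma gnTerm_nonneg {ε : ℕ → ℝ} (hε : ∀ n, ε n = 0 ∨ ε n = 1) (i : ℕ) : 0 ≤ gnTerm ε i := by
  have h1 := eps_nonneg hε (2 * i)
  have h2 := eps_nonneg hε (2 * i + 1)
  have h3 : (0:ℝ) < 4 ^ (i + 1) := by positivity
  unfold gnTerm
  positivity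

lemma gnTerm_le {ε : ℕ → ℝ} (hε : ∀ n, ε n = 0 ∨ ε n = 1) (i : ℕ) :
    gnTerm ε i ≤ 5 / 4 ^ (i + 1) := by
  have h1 := eps_le_one hε (2 * i)
  have h2 := eps_le_one hε (2 * i + 1)
  have h3 : (0:ℝ) < 4 ^ (i + 1) := by positivity
  unfold gnTerm
  have h1' := eps_nonneg hε (2 * i)
  have h2' := eps_nonneg hε (2 * i + 1)
  have e3 : (0:ℝ) ≤ 3 / 4 ^ (i + 1) := by positivity
  have e2 : (0:ℝ) ≤ 2 / 4 ^ (i + 1) := by positivity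
  have key : 3 / (4:ℝ) ^ (i + 1) + 2 / 4 ^ (i + 1) = 5 / 4 ^ (i + 1) := by ring
  nlinarith [mul_le_of_le_one_left e3 h1, mul_le_of_le_one_left e2 h2]

lemma summable_five : Summable (fun i : ℕ => (5:ℝ) / 4 ^ (i + 1)) := by
  have h := (summable_geometric_of_lt_one (by norm_num : (0:ℝ) ≤ 1/4)
    (by norm_num : (1/4:ℝ) < 1)).mul_left (5/4)
  refine h.congr fun i => ?_
  rw [pow_succ]
  field_simp
  rw [← mul_pow]; norm_num

lemma summable_gnTerm {ε : ℕ → ℝ} (hε : ∀ n, ε n = 0 ∨ ε n = 1) :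
    Summable (gnTerm ε) :=
  Summable.of_nonneg_of_le (gnTerm_nonneg hε) (gnTerm_le hε) summable_five

/-- prepending a pair of bits -/
lemma gn_prepend {x : ℝ} (a b : ℝ) (ha : a = 0 ∨ a = 1) (hb : b = 0 ∨ b = 1)
    (hx : x ∈ guthrieNymannSet) : (3 * a + 2 * b + x) / 4 ∈ guthrieNymannSet := by
  obtain ⟨ε, hε, rfl⟩ := mem_gn.mp hx
  set ε' : ℕ → ℝ := fun n => if n = 0 then a else if n = 1 then b else ε (n - 2) with hε'def
  have hε' : ∀ n, ε' n = 0 ∨ ε' n = 1 := by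
    intro n
    simp only [hε'def]
    split
    · exact ha
    · split
      · exact hb
      · exact hε _
  refine mem_gn.mpr ⟨ε', hε', ?_⟩
  have hsucc : ∀ i : ℕ, gnTerm ε' (i + 1) = (1/4) * gnTerm ε i := by
    intro i
    have e1 : ε' (2 * (i + 1)) = ε (2 * i) := by
      simp only [hε'def]
      rw [if_neg (by omega), if_neg (by omega)]
      exact congrArg ε (by omega)
    have e2 : ε' (2 * (i + 1) + 1) = ε (2 * i + 1) := by
      simp only [hε'def]
      rw [if_neg (by omega), if_neg (by omega)]
      exact congrArg ε (by omega)
    unfold gnTerm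
    rw [e1, e2]
    have : (4:ℝ) ^ (i + 1 + 1) = 4 * 4 ^ (i + 1) := by rw [pow_succ]; ring
    rw [this]
    field_simp
  have h0 : gnTerm ε' 0 = a * (3/4) + b * (2/4) := by
    unfold gnTerm
    simp [hε'def]
  rw [Summable.tsum_eq_zero_add (summable_gnTerm hε')]
  have : ∑' i : ℕ, gnTerm ε' (i + 1) = ∑' i : ℕ, (1/4) * gnTerm ε i := by
    exact tsum_congr hsucc
  rw [this, tsum_mul_left, h0]
  ring

lemma gn_zero_mem : (0:ℝ) ∈ guthrieNymannSet := by
  refine mem_gn.mpr ⟨fun _ => 0, fun n => Or.inl rfl, ?_⟩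
  simp [gnTerm]

lemma gn_twothirds_mem : (2/3 : ℝ) ∈ guthrieNymannSet := by
  refine mem_gn.mpr ⟨fun n => if n % 2 = 1 then 1 else 0, by intro n; by_cases h : n % 2 = 1 <;> simp [h], ?_⟩
  have hterm : ∀ i : ℕ, gnTerm (fun n => if n % 2 = 1 then (1:ℝ) else 0) i
      = (1/2) * (1/4)^i := by
    intro i
    unfold gnTerm
    have h1 : (2 * i) % 2 = 0 := by omega
    have h2 : (2 * i + 1) % 2 = 1 := by omega
    simp only [h1, h2]
    norm_num
    rw [pow_succ]
    field_simp
    rw [mul_right_comm, ← mul_pow]; norm_num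
  rw [tsum_congr hterm, tsum_mul_left,
    tsum_geometric_of_lt_one (by norm_num) (by norm_num : (1/4:ℝ) < 1)]
  norm_num

noncomputable def gdf (n : ℕ) : ℕ → ℝ := fun i => if n + 1 ≤ i then (5:ℝ) / 4 ^ (i + 1) else 0

lemma summable_gdf (n : ℕ) : Summable (gdf n) := by
  apply Summable.of_nonneg_of_le (fun i => ?_) (fun i => ?_) summable_five
  · unfold gdf; split
    · positivity
    · exact le_rfl
  · unfold gdf; split
    · exact le_rfl
    · positivity

lemma tsum_gdf (n : ℕ) : ∑' i, gdf n i = 5/12 * (1/4) ^ n := by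
  induction n with
  | zero =>
    rw [Summable.tsum_eq_zero_add (summable_gdf 0)]
    have h0 : gdf 0 0 = 0 := by simp [gdf]
    have hs : ∀ i : ℕ, gdf 0 (i + 1) = (5/16) * (1/4) ^ i := by
      intro i
      unfold gdf
      rw [if_pos (by omega)]
      rw [pow_succ, pow_succ]
      field_simp
      rw [mul_right_comm, ← mul_pow]; norm_num
    rw [h0, tsum_congr hs, tsum_mul_left,
      tsum_geometric_of_lt_one (by norm_num) (by norm_num : (1/4:ℝ) < 1)]
    norm_num
  | succ n ih =>
    rw [Summable.tsum_eq_zero_add (summable_gdf (n+1))]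
    have h0 : gdf (n+1) 0 = 0 := by simp [gdf]
    have hs : ∀ i : ℕ, gdf (n+1) (i + 1) = (1/4) * gdf n i := by
      intro i
      unfold gdf
      by_cases h : n + 1 ≤ i
      · rw [if_pos (by omega), if_pos h, pow_succ]
        ring
      · rw [if_neg (by omega), if_neg h]
        ring
    rw [h0, tsum_congr hs, tsum_mul_left, ih]
    ring

lemma q_mem (n : ℕ) : (5/12 * (1/4) ^ n : ℝ) ∈ guthrieNymannSet := by
  set ε : ℕ → ℝ := fun j => if j < 2 * (n + 1) then 0 else 1 with hεdef
  have hε : ∀ j, ε j = 0 ∨ ε j = 1 := by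
    intro j; simp only [hεdef]; split
    · exact Or.inl rfl
    · exact Or.inr rfl
  refine mem_gn.mpr ⟨ε, hε, ?_⟩
  have hterm : ∀ i : ℕ, gnTerm ε i = gdf n i := by
    intro i
    unfold gnTerm gdf
    simp only [hεdef]
    by_cases h : n + 1 ≤ i
    · rw [if_neg (by omega), if_neg (by omega), if_pos h]
      ring
    · rw [if_pos (by omega), if_pos (by omega), if_neg h]
      ring
  rw [tsum_congr hterm, tsum_gdf]

lemma gn_gap (n : ℕ) {s : ℝ} (hs : s ∈ guthrieNymannSet) :
    s ≤ 5/12 * (1/4) ^ n ∨ 1/2 * (1/4) ^ n ≤ s := by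
  obtain ⟨ε, hε, rfl⟩ := mem_gn.mp hs
  by_cases h : ∀ i ≤ n, ε (2 * i) = 0 ∧ ε (2 * i + 1) = 0
  · left
    rw [← tsum_gdf n]
    apply Summable.tsum_le_tsum ?_ (summable_gnTerm hε) (summable_gdf n)
    intro i
    unfold gdf
    by_cases hi : n + 1 ≤ i
    · rw [if_pos hi]; exact gnTerm_le hε i
    · rw [if_neg hi]
      obtain ⟨h1, h2⟩ := h i (by omega)
      unfold gnTerm
      rw [h1, h2]
      norm_num
  · right
    push_neg at h
    obtain ⟨i, hin, hi⟩ := h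
    have hterm : 2 / 4 ^ (i+1) ≤ gnTerm ε i := by
      have h3 : (0:ℝ) < 4 ^ (i + 1) := by positivity
      have ha := eps_nonneg hε (2 * i)
      have hb := eps_nonneg hε (2 * i + 1)
      unfold gnTerm
      have h23 : (2:ℝ)/4^(i+1) ≤ 3/4^(i+1) := by gcongr <;> norm_num
      rcases Classical.em (ε (2 * i) = 1) with h1 | h1
      · rw [h1]
        nlinarith [mul_nonneg hb (le_of_lt (by positivity : (0:ℝ) < 2 / 4 ^ (i+1)))]
      · have h0 : ε (2 * i) = 0 := (hε (2*i)).resolve_right h1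
        have h2 : ε (2 * i + 1) = 1 :=
          (hε (2*i+1)).resolve_left (hi h0)
        rw [h2]
        nlinarith [mul_nonneg ha (le_of_lt (by positivity : (0:ℝ) < 3 / 4 ^ (i+1)))]
    have hle : (2:ℝ) / 4 ^ (i+1) ≤ ∑' j, gnTerm ε j :=
      le_trans hterm (Summable.le_tsum (summable_gnTerm hε) i fun j _ => gnTerm_nonneg hε j)
    have hpow : (4:ℝ) ^ (i+1) ≤ 4 ^ (n+1) := by
      apply pow_le_pow_right₀ (by norm_num) (by omega)
    have h1 : (1:ℝ)/2 * (1/4)^n = 2 / 4^(n+1) := by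
      rw [pow_succ, div_pow, one_pow]
      field_simp
      ring
    rw [h1]
    refine le_trans ?_ hle
    apply div_le_div_of_nonneg_left (by norm_num) (by positivity) hpow

/-- the coding map from Cantor space. -/
noncomputable def gnMap (b : ℕ → Bool) : ℝ := ∑' i, gnTerm (fun n => if b n then 1 else 0) i

lemma boolToReal_valid (b : ℕ → Bool) : ∀ n, (if b n then (1:ℝ) else 0) = 0 ∨ (if b n then (1:ℝ) else 0) = 1 := by
  intro n; split
  · exact Or.inr rfl
  · exact Or.inl rfl

lemma gn_eq_range : guthrieNymannSet = Set.range gnMap := by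
  ext s
  constructor
  · rintro hs
    obtain ⟨ε, hε, rfl⟩ := mem_gn.mp hs
    refine ⟨fun n => ε n = 1, ?_⟩
    unfold gnMap
    apply tsum_congr
    intro i
    unfold gnTerm
    have h : ∀ n, (if (decide (ε n = 1) : Bool) then (1:ℝ) else 0) = ε n := by
      intro n
      rcases hε n with h | h <;> simp [h]
    simp only []
    rw [h, h]
  · rintro ⟨b, rfl⟩
    exact mem_gn.mpr ⟨fun n => if b n then 1 else 0, boolToReal_valid b, rfl⟩

lemma gnMap_continuous : Continuous gnMap := by
  apply continuous_tsum (u := fun i : ℕ => (5:ℝ)/4^(i+1)) ?_ summable_five ?_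
  · intro i
    unfold gnTerm
    apply Continuous.add
    · apply Continuous.mul ?_ continuous_const
      exact (continuous_of_discreteTopology (f := fun v : Bool => if v then (1:ℝ) else 0)).comp
        (continuous_apply (2 * i))
    · apply Continuous.mul ?_ continuous_const
      exact (continuous_of_discreteTopology (f := fun v : Bool => if v then (1:ℝ) else 0)).comp
        (continuous_apply (2 * i + 1))
  · intro i b
    rw [Real.norm_eq_abs, abs_of_nonneg (gnTerm_nonneg (boolToReal_valid b) i)]
    exact gnTerm_le (boolToReal_valid b) i

lemma gn_isCompact : IsCompact guthrieNymannSet := by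
  rw [gn_eq_range]
  exact isCompact_range gnMap_continuous

lemma gn_isClosed : IsClosed guthrieNymannSet := gn_isCompact.isClosed

lemma gn_perfect : Perfect guthrieNymannSet := by
  constructor
  · exact gn_isClosed
  · intro x hx
    rw [accPt_iff_nhds]
    intro U hU
    obtain ⟨ε, hε, rfl⟩ := mem_gn.mp hx
    obtain ⟨δ, hδ, hball⟩ := Metric.mem_nhds_iff.mp hU
    obtain ⟨m, hm⟩ := exists_pow_lt_of_lt_one (by positivity : (0:ℝ) < δ/3)
      (by norm_num : (1/4:ℝ) < 1)
    have hc : (3:ℝ)/4^(m+1) < δ := by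
      have h1 : ((1:ℝ)/4)^m = 1/4^m := by rw [div_pow, one_pow]
      have h2 : (0:ℝ) < 4^m := by positivity
      rw [h1] at hm
      rw [pow_succ]
      rw [div_lt_iff₀ (by positivity)] at hm ⊢
      nlinarith
    set ε' : ℕ → ℝ := Function.update ε (2*m) (1 - ε (2*m)) with hε'def
    have hε' : ∀ n, ε' n = 0 ∨ ε' n = 1 := by
      intro n
      rcases eq_or_ne n (2*m) with h | h
      · rw [hε'def, h, Function.update_self]
        rcases hε (2*m) with h' | h' <;> rw [h']
        · right; ring
        · left; ring
      · rw [hε'def, Function.update_of_ne h]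
        exact hε n
    set c : ℝ := (1 - 2 * ε (2*m)) * (3/4^(m+1)) with hcdef
    have habs : |c| = 3/4^(m+1) := by
      rcases hε (2*m) with h | h <;> rw [hcdef, h]
      · rw [abs_of_nonneg (by positivity)]; ring_nf
      · have : (1 - 2 * (1:ℝ)) * (3/4^(m+1)) = -(3/4^(m+1)) := by ring
        rw [this, abs_neg, abs_of_nonneg (by positivity)]
    have hcne : c ≠ 0 := by
      intro h
      rw [h, abs_zero] at habs
      have : (0:ℝ) < 3/4^(m+1) := by positivity
      linarith
    have hterm : ∀ i, gnTerm ε' i = gnTerm ε i + (if i = m then c else 0) := by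
      intro i
      rcases eq_or_ne i m with rfl | h
      · rw [if_pos rfl]
        unfold gnTerm
        rw [hε'def, Function.update_self, Function.update_of_ne (by omega)]
        rw [hcdef]; ring
      · rw [if_neg h]
        unfold gnTerm
        rw [hε'def, Function.update_of_ne (by omega), Function.update_of_ne (by omega)]
        ring
    have hsumδ : Summable (fun i : ℕ => if i = m then c else 0) :=
      summable_of_ne_finset_zero (s := {m}) (by intro b hb; rw [if_neg (by simpa using hb)])
    have hy : ∑' i, gnTerm ε' i = (∑' i, gnTerm ε i) + c := by
      rw [tsum_congr hterm, Summable.tsum_add (summable_gnTerm hε) hsumδ, tsum_ite_eq]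
    refine ⟨(∑' i, gnTerm ε i) + c, ⟨?_, ?_⟩, ?_⟩
    · apply hball
      rw [Metric.mem_ball, Real.dist_eq]
      have : ∑' i, gnTerm ε i + c - ∑' i, gnTerm ε i = c := by ring
      rw [this, habs]
      exact hc
    · rw [← hy]
      exact mem_gn.mpr ⟨ε', hε', rfl⟩
    · intro h
      apply hcne
      linarith [h]

lemma gn_approx (n : ℕ) :
    (∀ t : ℝ, 2/3 ≤ t → t ≤ 1 → ∃ x ∈ T, |t - x| ≤ (1/4:ℝ) ^ n) ∧
    (∀ t : ℝ, 2/3 ≤ t → t ≤ 5/3 →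
      ∃ x ∈ T, |t - x| ≤ (1/4:ℝ) ^ n ∨ |t - 1 - x| ≤ (1/4:ℝ) ^ n) := by
  induction n with
  | zero =>
    constructor
    · intro t h1 h2
      exact ⟨2/3, gn_twothirds_mem, by rw [pow_zero, abs_le]; constructor <;> linarith⟩
    · intro t h1 h2
      by_cases h : t ≤ 1
      · exact ⟨2/3, gn_twothirds_mem, Or.inl (by rw [pow_zero, abs_le]; constructor <;> linarith)⟩
      · exact ⟨0, gn_zero_mem, Or.inr (by rw [pow_zero, abs_le]; push_neg at h; constructor <;> linarith)⟩
  | succ n ih =>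
    obtain ⟨ihA, ihC⟩ := ih
    have hpow : ((1:ℝ)/4) ^ (n+1) = (1/4)^n / 4 := by rw [pow_succ]; ring
    have habs4 : ∀ u : ℝ, |u / 4| = |u| / 4 := by
      intro u
      rw [abs_div]
      norm_num
    have hA : ∀ t : ℝ, 2/3 ≤ t → t ≤ 1 → ∃ x ∈ T, |t - x| ≤ (1/4:ℝ) ^ (n+1) := by
      intro t h1 h2
      by_cases h : t ≤ 11/12
      · obtain ⟨x', hx'T, hcase⟩ := ihC (4*t - 2) (by linarith) (by linarith)
        rcases hcase with hc | hc
        · refine ⟨(3*0 + 2*1 + x')/4, gn_prepend 0 1 (Or.inl rfl) (Or.inr rfl) hx'T, ?_⟩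
          have he : t - (3*0 + 2*1 + x')/4 = (4*t - 2 - x')/4 := by ring
          rw [he, habs4, hpow]
          linarith
        · refine ⟨(3*1 + 2*0 + x')/4, gn_prepend 1 0 (Or.inr rfl) (Or.inl rfl) hx'T, ?_⟩
          have he : t - (3*1 + 2*0 + x')/4 = (4*t - 2 - 1 - x')/4 := by ring
          rw [he, habs4, hpow]
          linarith
      · push_neg at h
        obtain ⟨x', hx'T, hc⟩ := ihA (4*t - 3) (by linarith) (by linarith)
        refine ⟨(3*1 + 2*0 + x')/4, gn_prepend 1 0 (Or.inr rfl) (Or.inl rfl) hx'T, ?_⟩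
        have he : t - (3*1 + 2*0 + x')/4 = (4*t - 3 - x')/4 := by ring
        rw [he, habs4, hpow]
        linarith
    refine ⟨hA, ?_⟩
    intro t h1 h2
    by_cases hle1 : t ≤ 1
    · obtain ⟨x, hxT, hx⟩ := hA t h1 hle1
      exact ⟨x, hxT, Or.inl hx⟩
    push_neg at hle1
    by_cases hu1 : t ≤ 7/6
    · -- t' = 4t - 3 ∈ [2/3, 5/3]
      obtain ⟨x', hx'T, hcase⟩ := ihC (4*t - 3) (by linarith) (by linarith)
      rcases hcase with hc | hc
      · refine ⟨(3*1 + 2*0 + x')/4, gn_prepend 1 0 (Or.inr rfl) (Or.inl rfl) hx'T, Or.inl ?_⟩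
        have he : t - (3*1 + 2*0 + x')/4 = (4*t - 3 - x')/4 := by ring
        rw [he, habs4, hpow]
        linarith
      · refine ⟨(3*0 + 2*0 + x')/4, gn_prepend 0 0 (Or.inl rfl) (Or.inl rfl) hx'T, Or.inr ?_⟩
        have he : t - 1 - (3*0 + 2*0 + x')/4 = (4*t - 3 - 1 - x')/4 := by ring
        rw [he, habs4, hpow]
        linarith
    push_neg at hu1
    by_cases hu2 : t ≤ 17/12
    · -- t' = 4t - 4 ∈ [2/3, 5/3]
      obtain ⟨x', hx'T, hcase⟩ := ihC (4*t - 4) (by linarith) (by linarith)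
      rcases hcase with hc | hc
      · refine ⟨(3*0 + 2*0 + x')/4, gn_prepend 0 0 (Or.inl rfl) (Or.inl rfl) hx'T, Or.inr ?_⟩
        have he : t - 1 - (3*0 + 2*0 + x')/4 = (4*t - 4 - x')/4 := by ring
        rw [he, habs4, hpow]
        linarith
      · refine ⟨(3*1 + 2*1 + x')/4, gn_prepend 1 1 (Or.inr rfl) (Or.inr rfl) hx'T, Or.inl ?_⟩
        have he : t - (3*1 + 2*1 + x')/4 = (4*t - 4 - 1 - x')/4 := by ring
        rw [he, habs4, hpow]
        linarith
    push_neg at hu2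
    -- t' = 4t - 5 ∈ [2/3, 5/3]
    obtain ⟨x', hx'T, hcase⟩ := ihC (4*t - 5) (by linarith) (by linarith)
    rcases hcase with hc | hc
    · refine ⟨(3*1 + 2*1 + x')/4, gn_prepend 1 1 (Or.inr rfl) (Or.inr rfl) hx'T, Or.inl ?_⟩
      have he : t - (3*1 + 2*1 + x')/4 = (4*t - 5 - x')/4 := by ring
      rw [he, habs4, hpow]
      linarith
    · refine ⟨(3*0 + 2*1 + x')/4, gn_prepend 0 1 (Or.inl rfl) (Or.inr rfl) hx'T, Or.inr ?_⟩
      have he : t - 1 - (3*0 + 2*1 + x')/4 = (4*t - 5 - 1 - x')/4 := by ring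
      rw [he, habs4, hpow]
      linarith

lemma gn_Icc_subset : Set.Icc (2/3 : ℝ) 1 ⊆ T := by
  intro y hy
  obtain ⟨h1, h2⟩ := hy
  have : y ∈ closure T := by
    rw [Metric.mem_closure_iff]
    intro δ hδ
    obtain ⟨n, hn⟩ := exists_pow_lt_of_lt_one hδ (by norm_num : (1/4:ℝ) < 1)
    obtain ⟨x, hxT, hx⟩ := (gn_approx n).1 y h1 h2
    refine ⟨x, hxT, ?_⟩
    rw [Real.dist_eq]
    calc |y - x| ≤ (1/4:ℝ)^n := hx
      _ < δ := hn
  rwa [gn_isClosed.closure_eq] at this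

lemma gn_interior_nonempty : (interior guthrieNymannSet).Nonempty := by
  have h : Set.Ioo (2/3 : ℝ) 1 ⊆ interior T :=
    interior_maximal (Set.Ioo_subset_Icc_self.trans gn_Icc_subset) isOpen_Ioo
  exact ⟨3/4, h (by norm_num)⟩

lemma q_not_interior (n : ℕ) : (5/12 * (1/4) ^ n : ℝ) ∉ interior T := by
  intro h
  obtain ⟨δ, hδ, hball⟩ := Metric.isOpen_iff.mp isOpen_interior _ h
  have hp : (0:ℝ) < (1/4)^n := by positivity
  set y : ℝ := 5/12 * (1/4)^n + min (δ/2) (1/48 * (1/4)^n) with hydef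
  have hymem : y ∈ T := by
    apply interior_subset
    apply hball
    rw [Metric.mem_ball, Real.dist_eq, hydef]
    have h1 : (0:ℝ) < min (δ/2) (1/48 * (1/4)^n) := lt_min (by linarith) (by positivity)
    have h2 : min (δ/2) (1/48 * (1/4)^n) ≤ δ/2 := min_le_left _ _
    rw [abs_of_nonneg (by linarith)]
    linarith
  have h1 : (0:ℝ) < min (δ/2) (1/48 * (1/4)^n) := lt_min (by linarith) (by positivity)
  have h2 : min (δ/2) (1/48 * (1/4)^n) ≤ 1/48 * (1/4)^n := min_le_right _ _
  rcases gn_gap n hymem with h | h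
  · rw [hydef] at h
    linarith
  · rw [hydef] at h
    linarith

lemma gn_not_finite_union : ¬ IsFiniteUnionOfClosedIntervals T := by
  rintro ⟨s, hs⟩
  set F : Finset ℝ := s.image Prod.fst ∪ s.image Prod.snd with hF
  have hsub : ∀ n : ℕ, (5/12 * (1/4) ^ n : ℝ) ∈ (F : Set ℝ) := by
    intro n
    have hmem : (5/12 * (1/4) ^ n : ℝ) ∈ T := q_mem n
    rw [hs] at hmem
    rw [Set.mem_iUnion₂] at hmem
    obtain ⟨p, hps, hp⟩ := hmem
    rcases eq_or_ne (5/12 * (1/4) ^ n : ℝ) p.1 with h1 | h1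
    · simp only [hF, Finset.coe_union, Set.mem_union, Finset.coe_image, Set.mem_image]
      left
      exact ⟨p, hps, h1.symm⟩
    rcases eq_or_ne (5/12 * (1/4) ^ n : ℝ) p.2 with h2 | h2
    · simp only [hF, Finset.coe_union, Set.mem_union, Finset.coe_image, Set.mem_image]
      right
      exact ⟨p, hps, h2.symm⟩
    exfalso
    apply q_not_interior n
    have hoo : (5/12 * (1/4) ^ n : ℝ) ∈ Set.Ioo p.1 p.2 := by
      obtain ⟨ha, hb⟩ := hp
      exact ⟨lt_of_le_of_ne ha (Ne.symm h1), lt_of_le_of_ne hb h2⟩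
    have hIoosub : Set.Ioo p.1 p.2 ⊆ T := by
      intro z hz
      rw [hs]
      exact Set.mem_iUnion₂.mpr ⟨p, hps, Set.Ioo_subset_Icc_self hz⟩
    exact interior_maximal hIoosub isOpen_Ioo hoo
  have hinj : Function.Injective (fun n : ℕ => (5/12 * (1/4) ^ n : ℝ)) := by
    have hanti : StrictAnti (fun n : ℕ => (5/12 * (1/4) ^ n : ℝ)) := by
      intro m n hmn
      have h := pow_lt_pow_right_of_lt_one₀ (by norm_num : (0:ℝ) < 1/4) (by norm_num) hmn
      simp only []
      linarith
    exact hanti.injective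
  have hinf : (Set.range (fun n : ℕ => (5/12 * (1/4) ^ n : ℝ))).Infinite :=
    Set.infinite_range_of_injective hinj
  apply hinf
  apply Set.Finite.subset F.finite_toSet
  rintro _ ⟨n, rfl⟩
  exact hsub n

/-- (Guthrie–Nymann) The set `T` has nonempty interior but is not a finite union of closed
intervals; hence `T` is a Cantorval. -/
theorem guthrieNymannSet_isCantorval :
    (interior guthrieNymannSet).Nonempty ∧
    ¬ IsFiniteUnionOfClosedIntervals guthrieNymannSet ∧
    IsCantorval guthrieNymannSet := by
  refine ⟨gn_interior_nonempty, gn_not_finite_union,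
    ⟨0, gn_zero_mem⟩, gn_isCompact, gn_perfect, gn_interior_nonempty, gn_not_finite_union⟩
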